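/- For an increasing positive integer sequence c = (c_1,…,c_n) and r ∈ [n], the number of r-partial sequences in S_c^{(r)} with first entry equal to 1 is Σ_{I ∈ C([2,n], r−1)} ∏_{i∈I} c_i, and this equals the maximum size of a star of S_c^{(r)} (i.e. |{a ∈ S_c^{(r)} : a_p = q}| ≤ |S_c^{(r)}(1)| for all p ∈ [n], q ∈ [c_p]). -/

import Mathlib

set_option maxHeartbeats 1000000

open Finset

section Aux

variable {n : ℕ}

/-- Build a sequence from values on `I`, value `q` at `p`, zero elsewhere. -/
private def build (p : Fin (n+1)) (q : ℕ) (I : Finset (Fin (n+1)))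
    (g : ∀ i ∈ I, ℕ) : Fin (n+1) → ℕ :=
  fun i => if h : i ∈ I then g i h else if i = p then q else 0

private def Fset (c : Fin (n+1) → ℕ) (p : Fin (n+1)) (q : ℕ) (I : Finset (Fin (n+1))) :
    Finset (Fin (n+1) → ℕ) :=
  (I.pi (fun i => Finset.Icc 1 (c i))).image (fun g => build p q I g)

private lemma mem_Fset {c : Fin (n+1) → ℕ} {p : Fin (n+1)} {q : ℕ}
    {I : Finset (Fin (n+1))} (hpI : p ∉ I) {a : Fin (n+1) → ℕ} :
    a ∈ Fset c p q I ↔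
      ((∀ i ∈ I, 1 ≤ a i ∧ a i ≤ c i) ∧ a p = q ∧ ∀ i, i ∉ I → i ≠ p → a i = 0) := by
  constructor
  · rintro h
    simp only [Fset, mem_image] at h
    obtain ⟨g, hg, rfl⟩ := h
    simp only [Finset.mem_pi, Finset.mem_Icc] at hg
    refine ⟨fun i hi => ?_, ?_, fun i hi hip => ?_⟩
    · simpa [build, hi] using hg i hi
    · simp [build, hpI]
    · simp [build, hi, hip]
  · rintro ⟨h1, h2, h3⟩
    simp only [Fset, mem_image]
    refine ⟨fun i _ => a i, ?_, ?_⟩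
    · simp only [Finset.mem_pi, Finset.mem_Icc]
      exact fun i hi => h1 i hi
    · funext i
      by_cases hi : i ∈ I
      · simp [build, hi]
      · by_cases hip : i = p
        · subst hip; simp [build, hi, h2]
        · simp [build, hi, hip, h3 i hi hip]

private lemma card_Fset (c : Fin (n+1) → ℕ) (p : Fin (n+1)) (q : ℕ) (hq : 1 ≤ q)
    (I : Finset (Fin (n+1))) (hpI : p ∉ I) :
    (Fset c p q I).card = ∏ i ∈ I, c i := by
  rw [Fset, Finset.card_image_of_injOn, Finset.card_pi]
  · simp [Nat.card_Icc]
  · intro g hg g' hg' hgg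
    funext i hi
    have := congrFun hgg i
    simpa [build, hi] using this

private lemma star_eq (c : Fin (n+1) → ℕ) (r : ℕ) (hr : 1 ≤ r)
    (p : Fin (n+1)) (q : ℕ) (hq1 : 1 ≤ q) (hq2 : q ≤ c p) :
    {a : Fin (n + 1) → ℕ |
        ((Finset.univ.filter fun i => a i ≠ 0).card = r ∧ ∀ i, a i ≤ c i) ∧ a p = q} =
    ↑((Finset.powersetCard (r - 1) (Finset.univ.erase p)).biUnion (Fset c p q)) := by
  ext a
  simp only [Set.mem_setOf_eq, Finset.coe_biUnion, Set.mem_iUnion, Finset.mem_coe,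
    Finset.mem_powersetCard]
  constructor
  · rintro ⟨⟨hcard, hle⟩, hap⟩
    set s := Finset.univ.filter fun i => a i ≠ 0 with hs
    have hps : p ∈ s := by
      simp only [hs, Finset.mem_filter, Finset.mem_univ, true_and]
      omega
    refine ⟨s.erase p, ⟨⟨fun i hi => ?_, ?_⟩, ?_⟩⟩
    · simp only [Finset.mem_erase] at hi ⊢
      exact ⟨hi.1, Finset.mem_univ i⟩
    · rw [Finset.card_erase_of_mem hps, hcard]
    · rw [mem_Fset (Finset.notMem_erase p s)]
      refine ⟨fun i hi => ?_, hap, fun i hi hip => ?_⟩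
      · have : a i ≠ 0 := (Finset.mem_filter.mp (Finset.mem_of_mem_erase hi)).2
        exact ⟨by omega, hle i⟩
      · by_contra h
        exact hi (Finset.mem_erase.mpr ⟨hip, by simp [hs, h]⟩)
  · rintro ⟨I, ⟨⟨hIsub, hIcard⟩, haI⟩⟩
    have hpI : p ∉ I := fun h => (Finset.mem_erase.mp (hIsub h)).1 rfl
    rw [mem_Fset hpI] at haI
    obtain ⟨h1, h2, h3⟩ := haI
    have hsupp : (Finset.univ.filter fun i => a i ≠ 0) = insert p I := by
      ext i
      simp only [Finset.mem_filter, Finset.mem_univ, true_and, Finset.mem_insert]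
      constructor
      · intro hne
        by_cases hip : i = p
        · exact Or.inl hip
        · right; by_contra hiI; exact hne (h3 i hiI hip)
      · rintro (rfl | hiI)
        · omega
        · have := (h1 i hiI).1; omega
    refine ⟨⟨?_, fun i => ?_⟩, h2⟩
    · rw [hsupp, Finset.card_insert_of_notMem hpI, hIcard]; omega
    · by_cases hiI : i ∈ I
      · exact (h1 i hiI).2
      · by_cases hip : i = p
        · subst hip; omega
        · rw [h3 i hiI hip]; omega

private lemma star_ncard (c : Fin (n+1) → ℕ) (r : ℕ) (hr : 1 ≤ r)
    (p : Fin (n+1)) (q : ℕ) (hq1 : 1 ≤ q) (hq2 : q ≤ c p) :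
    Set.ncard {a : Fin (n + 1) → ℕ |
        ((Finset.univ.filter fun i => a i ≠ 0).card = r ∧ ∀ i, a i ≤ c i) ∧ a p = q} =
      ∑ I ∈ Finset.powersetCard (r - 1) (Finset.univ.erase p), ∏ i ∈ I, c i := by
  rw [star_eq c r hr p q hq1 hq2, Set.ncard_coe_finset]
  rw [Finset.card_biUnion]
  · apply Finset.sum_congr rfl
    intro I hI
    have hpI : p ∉ I := fun h =>
      (Finset.mem_erase.mp ((Finset.mem_powersetCard.mp hI).1 h)).1 rfl
    exact card_Fset c p q hq1 I hpI
  · intro I hI J hJ hIJ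
    have hpI : p ∉ I := fun h =>
      (Finset.mem_erase.mp ((Finset.mem_powersetCard.mp hI).1 h)).1 rfl
    have hpJ : p ∉ J := fun h =>
      (Finset.mem_erase.mp ((Finset.mem_powersetCard.mp hJ).1 h)).1 rfl
    rw [Function.onFun, Finset.disjoint_left]
    intro a haI haJ
    rw [mem_Fset hpI] at haI
    rw [mem_Fset hpJ] at haJ
    apply hIJ
    ext i
    constructor
    · intro hi
      by_contra hiJ
      have hip : i ≠ p := fun h => hpI (h ▸ hi)
      have := (haI.1 i hi).1
      have := haJ.2.2 i hiJ hip
      omega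
    · intro hi
      by_contra hiI
      have hip : i ≠ p := fun h => hpJ (h ▸ hi)
      have := (haJ.1 i hi).1
      have := haI.2.2 i hiI hip
      omega

private lemma sum_le_sum_star (c : Fin (n+1) → ℕ) (hmono : Monotone c)
    (p : Fin (n+1)) (k : ℕ) :
    ∑ I ∈ Finset.powersetCard k (Finset.univ.erase p), ∏ i ∈ I, c i ≤
    ∑ I ∈ Finset.powersetCard k (Finset.univ.erase (0 : Fin (n+1))), ∏ i ∈ I, c i := by
  by_cases hp0 : p = 0
  · subst hp0; exact le_refl _
  set e : Finset (Fin (n+1)) → Finset (Fin (n+1)) :=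
    fun I => if (0 : Fin (n+1)) ∈ I then insert p (I.erase 0) else I with he
  have hmaps : ∀ I ∈ Finset.powersetCard k (Finset.univ.erase p),
      e I ∈ Finset.powersetCard k (Finset.univ.erase (0 : Fin (n+1))) := by
    intro I hI
    obtain ⟨hIsub, hIcard⟩ := Finset.mem_powersetCard.mp hI
    have hpI : p ∉ I := fun h => (Finset.mem_erase.mp (hIsub h)).1 rfl
    rw [Finset.mem_powersetCard]
    by_cases h0 : (0 : Fin (n+1)) ∈ I
    · simp only [he, if_pos h0]
      constructor
      · intro i hi
        rw [Finset.mem_insert] at hi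
        rcases hi with rfl | hi
        · exact Finset.mem_erase.mpr ⟨hp0, Finset.mem_univ _⟩
        · exact Finset.mem_erase.mpr ⟨(Finset.mem_erase.mp hi).1, Finset.mem_univ _⟩
      · rw [Finset.card_insert_of_notMem (fun h => hpI (Finset.mem_of_mem_erase h)),
          Finset.card_erase_of_mem h0, hIcard]
        have : 1 ≤ k := by
          rw [← hIcard]
          exact Finset.card_pos.mpr ⟨0, h0⟩
        omega
    · simp only [he, if_neg h0]
      refine ⟨fun i hi => Finset.mem_erase.mpr ⟨fun h => h0 (h ▸ hi), Finset.mem_univ _⟩, hIcard⟩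
  have hle : ∀ I ∈ Finset.powersetCard k (Finset.univ.erase p),
      ∏ i ∈ I, c i ≤ ∏ i ∈ e I, c i := by
    intro I hI
    obtain ⟨hIsub, _⟩ := Finset.mem_powersetCard.mp hI
    have hpI : p ∉ I := fun h => (Finset.mem_erase.mp (hIsub h)).1 rfl
    by_cases h0 : (0 : Fin (n+1)) ∈ I
    · simp only [he, if_pos h0]
      rw [Finset.prod_insert (fun h => hpI (Finset.mem_of_mem_erase h)),
        ← Finset.mul_prod_erase I c h0]
      exact Nat.mul_le_mul_right _ (hmono (Fin.zero_le p))
    · simp [he, if_neg h0]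
  have hinj : Set.InjOn e (Finset.powersetCard k (Finset.univ.erase p)) := by
    intro I hI J hJ hIJ
    obtain ⟨hIsub, _⟩ := Finset.mem_powersetCard.mp hI
    obtain ⟨hJsub, _⟩ := Finset.mem_powersetCard.mp hJ
    have hpI : p ∉ I := fun h => (Finset.mem_erase.mp (hIsub h)).1 rfl
    have hpJ : p ∉ J := fun h => (Finset.mem_erase.mp (hJsub h)).1 rfl
    simp only [he] at hIJ
    by_cases h0I : (0 : Fin (n+1)) ∈ I <;> by_cases h0J : (0 : Fin (n+1)) ∈ J
    · rw [if_pos h0I, if_pos h0J] at hIJ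
      have hpInot : p ∉ I.erase 0 := fun h => hpI (Finset.mem_of_mem_erase h)
      have hpJnot : p ∉ J.erase 0 := fun h => hpJ (Finset.mem_of_mem_erase h)
      have : I.erase 0 = J.erase 0 := by
        have := congrArg (fun s => Finset.erase s p) hIJ
        simpa [Finset.erase_insert hpInot, Finset.erase_insert hpJnot] using this
      have hI' : I = insert 0 (I.erase 0) := (Finset.insert_erase h0I).symm
      have hJ' : J = insert 0 (J.erase 0) := (Finset.insert_erase h0J).symm
      rw [hI', hJ', this]
    · rw [if_pos h0I, if_neg h0J] at hIJ
      exfalso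
      have : p ∈ J := hIJ ▸ Finset.mem_insert_self p _
      exact hpJ this
    · rw [if_neg h0I, if_pos h0J] at hIJ
      exfalso
      have : p ∈ I := by rw [hIJ]; exact Finset.mem_insert_self p _
      exact hpI this
    · rwa [if_neg h0I, if_neg h0J] at hIJ
  calc ∑ I ∈ Finset.powersetCard k (Finset.univ.erase p), ∏ i ∈ I, c i
      ≤ ∑ I ∈ Finset.powersetCard k (Finset.univ.erase p), ∏ i ∈ e I, c i :=
        Finset.sum_le_sum hle
    _ = ∑ J ∈ (Finset.powersetCard k (Finset.univ.erase p)).image e, ∏ i ∈ J, c i :=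
        by rw [Finset.sum_image (fun I hI J hJ h => hinj hI hJ h)]
    _ ≤ ∑ I ∈ Finset.powersetCard k (Finset.univ.erase (0 : Fin (n+1))), ∏ i ∈ I, c i := by
        apply Finset.sum_le_sum_of_subset
        intro J hJ
        obtain ⟨I, hI, rfl⟩ := Finset.mem_image.mp hJ
        exact hmaps I hI

end Aux

theorem stmt18 (n r : ℕ) (c : Fin (n + 1) → ℕ) (hmono : Monotone c) (hpos : ∀ i, 1 ≤ c i)
    (hr : 1 ≤ r) (hrn : r ≤ n + 1) :
    Set.ncard {a : Fin (n + 1) → ℕ |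
        ((Finset.univ.filter fun i => a i ≠ 0).card = r ∧ ∀ i, a i ≤ c i) ∧ a 0 = 1} =
      ∑ I ∈ Finset.powersetCard (r - 1) (Finset.univ.erase (0 : Fin (n + 1))),
        ∏ i ∈ I, c i ∧
    ∀ (p : Fin (n + 1)) (q : ℕ), 1 ≤ q → q ≤ c p →
      Set.ncard {a : Fin (n + 1) → ℕ |
          ((Finset.univ.filter fun i => a i ≠ 0).card = r ∧ ∀ i, a i ≤ c i) ∧ a p = q} ≤
      Set.ncard {a : Fin (n + 1) → ℕ |
          ((Finset.univ.filter fun i => a i ≠ 0).card = r ∧ ∀ i, a i ≤ c i) ∧ a 0 = 1} := by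
  have h0 := star_ncard c r hr 0 1 le_rfl (hpos 0)
  refine ⟨h0, fun p q hq1 hq2 => ?_⟩
  rw [h0, star_ncard c r hr p q hq1 hq2]
  exact sum_le_sum_star c hmono p (r - 1)
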